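/- Let 𝒜 be a compact H-set of strictly positive N×M matrices and ℬ a compact H-set of strictly positive M×N matrices. Then there exist matrices à ∈ 𝒜 and B̃ ∈ ℬ such that ρ(ÃB) ≤ ρ(ÃB̃) ≤ ρ(AB̃) for all A in the convex hull of 𝒜 and all B in the convex hull of ℬ. -/

import Mathlib

open Matrix

/-- The spectral radius of a real square matrix: the supremum of the moduli of
its complex eigenvalues. -/
noncomputable def specRad {n : ℕ} (A : Matrix (Fin n) (Fin n) ℝ) : ℝ :=
  sSup ((fun z : ℂ => ‖z‖) '' spectrum ℂ (A.map (Complex.ofReal)))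

/-- A set of strictly positive matrices is an *H-set* (hourglass set) if all its
elements are entrywise positive and, for every matrix `A₀` in the set and every
componentwise positive vector `u`, both assertions H1 and H2 of the hourglass
alternative hold. -/
def IsHSet {N M : ℕ} (S : Set (Matrix (Fin N) (Fin M) ℝ)) : Prop :=
  (∀ A ∈ S, ∀ i j, 0 < A i j) ∧
  ∀ A₀ ∈ S, ∀ u : Fin M → ℝ, (∀ j, 0 < u j) →
    ((∀ A ∈ S, A₀.mulVec u ≤ A.mulVec u) ∨
      ∃ A' ∈ S, A'.mulVec u ≤ A₀.mulVec u ∧ A'.mulVec u ≠ A₀.mulVec u) ∧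
    ((∀ A ∈ S, A.mulVec u ≤ A₀.mulVec u) ∨
      ∃ A' ∈ S, A₀.mulVec u ≤ A'.mulVec u ∧ A'.mulVec u ≠ A₀.mulVec u)

namespace Stmt16Aux

/-! ### Spectrum basics -/

lemma mem_spectrum_of_eigen {n : ℕ} (M : Matrix (Fin n) (Fin n) ℂ) (μ : ℂ)
    (v : Fin n → ℂ) (hv : v ≠ 0) (h : M.mulVec v = μ • v) : μ ∈ spectrum ℂ M := by
  rw [spectrum.mem_iff]
  intro hU
  rw [Matrix.isUnit_iff_isUnit_det] at hU
  have hdet : (algebraMap ℂ (Matrix (Fin n) (Fin n) ℂ) μ - M).det = 0 := by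
    refine Matrix.exists_mulVec_eq_zero_iff.mp ⟨v, hv, ?_⟩
    have halg : (algebraMap ℂ (Matrix (Fin n) (Fin n) ℂ) μ) = μ • 1 := by
      simp [Algebra.algebraMap_eq_smul_one]
    rw [halg, Matrix.sub_mulVec, Matrix.smul_mulVec, Matrix.one_mulVec, h, sub_self]
  exact hU.ne_zero hdet

lemma eigen_of_mem_spectrum {n : ℕ} (M : Matrix (Fin n) (Fin n) ℂ) (μ : ℂ)
    (h : μ ∈ spectrum ℂ M) : ∃ v, v ≠ 0 ∧ M.mulVec v = μ • v := by
  rw [spectrum.mem_iff] at h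
  rw [Matrix.isUnit_iff_isUnit_det, isUnit_iff_ne_zero, not_not] at h
  obtain ⟨v, hv, hv0⟩ := Matrix.exists_mulVec_eq_zero_iff.mpr h
  refine ⟨v, hv, ?_⟩
  have halg : (algebraMap ℂ (Matrix (Fin n) (Fin n) ℂ) μ) = μ • 1 := by
    simp [Algebra.algebraMap_eq_smul_one]
  rw [halg, Matrix.sub_mulVec, Matrix.smul_mulVec, Matrix.one_mulVec, sub_eq_zero] at hv0
  exact hv0.symm

lemma spectrum_transpose {n : ℕ} (M : Matrix (Fin n) (Fin n) ℂ) :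
    spectrum ℂ Mᵀ = spectrum ℂ M := by
  ext μ
  rw [spectrum.mem_iff, spectrum.mem_iff, Matrix.isUnit_iff_isUnit_det,
    Matrix.isUnit_iff_isUnit_det]
  have : (algebraMap ℂ (Matrix (Fin n) (Fin n) ℂ) μ - Mᵀ).det
      = (algebraMap ℂ (Matrix (Fin n) (Fin n) ℂ) μ - M).det := by
    rw [← Matrix.det_transpose (algebraMap ℂ (Matrix (Fin n) (Fin n) ℂ) μ - M),
      Matrix.transpose_sub]
    congr 1
    simp [Algebra.algebraMap_eq_smul_one, Matrix.transpose_smul]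
  rw [this]

lemma map_mulVec_ofReal {n m : ℕ} (M : Matrix (Fin n) (Fin m) ℝ) (v : Fin m → ℝ) :
    (M.map Complex.ofReal).mulVec (fun j => (v j : ℂ)) = fun i => ((M.mulVec v i : ℝ) : ℂ) := by
  funext i
  simp [Matrix.mulVec, dotProduct, Matrix.map_apply]

/-! ### Collatz–Wielandt bounds -/

/-- every eigenvalue modulus is ≤ l when C w ≤ l w, w > 0, C ≥ 0 -/
lemma abs_spec_le {n : ℕ} (C : Matrix (Fin n) (Fin n) ℝ) (hC : ∀ i j, 0 ≤ C i j)
    (w : Fin n → ℝ) (hw : ∀ i, 0 < w i) (l : ℝ)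
    (hCw : ∀ i, C.mulVec w i ≤ l * w i) :
    ∀ z ∈ (fun z : ℂ => ‖z‖) '' spectrum ℂ (C.map Complex.ofReal), z ≤ l := by
  rintro z ⟨μ, hμ, rfl⟩
  obtain ⟨x, hx, hxe⟩ := eigen_of_mem_spectrum _ _ hμ
  have hne : (Finset.univ : Finset (Fin n)).Nonempty := by
    by_contra h
    rw [Finset.not_nonempty_iff_eq_empty, Finset.univ_eq_empty_iff] at h
    exact hx (funext fun i => absurd (h.false i) (by simp))
  obtain ⟨i0, _, hi0⟩ := Finset.exists_max_image Finset.univ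
    (fun i => ‖x i‖ / w i) hne
  set t := ‖x i0‖ / w i0 with ht
  have htpos : 0 < t := by
    rcases Function.ne_iff.mp hx with ⟨i, hi⟩
    have h1 : 0 < ‖x i‖ / w i := div_pos (by simpa using hi) (hw i)
    exact lt_of_lt_of_le h1 (hi0 i (Finset.mem_univ i))
  have hbound : ∀ i, ‖x i‖ ≤ t * w i := fun i => by
    have := hi0 i (Finset.mem_univ i)
    calc ‖x i‖ = (‖x i‖ / w i) * w i := by
          rw [div_mul_cancel₀]; exact (hw i).ne'
      _ ≤ t * w i := mul_le_mul_of_nonneg_right this (hw i).le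
  have key : ‖μ‖ * ‖x i0‖ ≤ t * (l * w i0) := by
    have h1 : ‖μ * x i0‖ = ‖μ‖ * ‖x i0‖ := norm_mul _ _
    have h2 : μ * x i0 = ((C.map Complex.ofReal).mulVec x) i0 := by
      rw [hxe]; simp [Pi.smul_apply, smul_eq_mul]
    have h3 : ‖((C.map Complex.ofReal).mulVec x) i0‖
        ≤ ∑ j, C i0 j * ‖x j‖ := by
      rw [Matrix.mulVec, dotProduct]
      refine le_trans (norm_sum_le _ _) (Finset.sum_le_sum fun j _ => ?_)
      rw [Matrix.map_apply, norm_mul, Complex.norm_real, Real.norm_of_nonneg (hC i0 j)]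
    have h4 : ∑ j, C i0 j * ‖x j‖ ≤ ∑ j, C i0 j * (t * w j) :=
      Finset.sum_le_sum fun j _ => mul_le_mul_of_nonneg_left (hbound j) (hC i0 j)
    have h5 : ∑ j, C i0 j * (t * w j) = t * C.mulVec w i0 := by
      rw [Matrix.mulVec, dotProduct, Finset.mul_sum]
      congr 1; funext j; ring
    calc ‖μ‖ * ‖x i0‖ = ‖μ * x i0‖ := h1.symm
      _ = ‖((C.map Complex.ofReal).mulVec x) i0‖ := by rw [h2]
      _ ≤ ∑ j, C i0 j * ‖x j‖ := h3
      _ ≤ ∑ j, C i0 j * (t * w j) := h4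
      _ = t * C.mulVec w i0 := h5
      _ ≤ t * (l * w i0) := mul_le_mul_of_nonneg_left (hCw i0) htpos.le
  have hxi0 : ‖x i0‖ = t * w i0 := by
    rw [ht, div_mul_cancel₀]; exact (hw i0).ne'
  rw [hxi0] at key
  have hwp : 0 < t * w i0 := mul_pos htpos (hw i0)
  have := (div_le_div_iff_of_pos_right hwp).mpr key
  calc ‖μ‖ = ‖μ‖ * (t * w i0) / (t * w i0) := by
        rw [mul_div_cancel_right₀]; exact hwp.ne'
    _ ≤ t * (l * w i0) / (t * w i0) := this
    _ = l := by
        rw [show t * (l * w i0) = l * (t * w i0) by ring, mul_div_cancel_right₀]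
        exact hwp.ne'

lemma specRad_le {n : ℕ} (C : Matrix (Fin n) (Fin n) ℝ) (hC : ∀ i j, 0 ≤ C i j)
    (w : Fin n → ℝ) (hw : ∀ i, 0 < w i) (l : ℝ) (hl : 0 ≤ l)
    (hCw : ∀ i, C.mulVec w i ≤ l * w i) : specRad C ≤ l :=
  Real.sSup_le (abs_spec_le C hC w hw l hCw) hl

lemma bddAbove_absSpec {n : ℕ} (C : Matrix (Fin n) (Fin n) ℝ) (hC : ∀ i j, 0 ≤ C i j)
    (w : Fin n → ℝ) (hw : ∀ i, 0 < w i) (l : ℝ)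
    (hCw : ∀ i, C.mulVec w i ≤ l * w i) :
    BddAbove ((fun z : ℂ => ‖z‖) '' spectrum ℂ (C.map Complex.ofReal)) :=
  ⟨l, fun z hz => abs_spec_le C hC w hw l hCw z hz⟩

lemma le_specRad_of_eigen {n : ℕ} (C : Matrix (Fin n) (Fin n) ℝ) (hC : ∀ i j, 0 ≤ C i j)
    (w : Fin n → ℝ) (hw : ∀ i, 0 < w i) (l u : ℝ)
    (hCwu : ∀ i, C.mulVec w i ≤ u * w i)
    (v : Fin n → ℝ) (hv : v ≠ 0) (heig : C.mulVec v = l • v) (hl : 0 ≤ l) :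
    l ≤ specRad C := by
  have hmem : (l : ℂ) ∈ spectrum ℂ (C.map Complex.ofReal) := by
    apply mem_spectrum_of_eigen _ _ (fun j => (v j : ℂ))
    · intro h
      apply hv
      funext j
      have := congrFun h j
      simpa using this
    · rw [map_mulVec_ofReal]
      funext i
      rw [heig]
      simp
  have hmem2 : ‖(l : ℂ)‖ ∈ (fun z : ℂ => ‖z‖) '' spectrum ℂ (C.map Complex.ofReal) := ⟨_, hmem, rfl⟩
  have := le_csSup (bddAbove_absSpec C hC w hw u hCwu) hmem2
  rwa [Complex.norm_real, Real.norm_of_nonneg hl] at this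

/-! ### The nonlinear Perron–Frobenius lemma -/

lemma exists_eigen {n : ℕ} (hn : Nonempty (Fin n)) (T : (Fin n → ℝ) → (Fin n → ℝ))
    (hTcont : Continuous T)
    (hTpos : ∀ v : Fin n → ℝ, (∀ i, 0 ≤ v i) → (∃ i, 0 < v i) → ∀ i, 0 < T v i)
    (hThom : ∀ c : ℝ, 0 < c → ∀ v : Fin n → ℝ, (∀ i, 0 ≤ v i) → T (c • v) = c • T v)
    (hTmono : ∀ x y : Fin n → ℝ, (∀ i, 0 ≤ x i) → (∀ i, x i ≤ y i) → (∃ i, x i < y i) →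
        ∀ i, T x i < T y i) :
    ∃ (w : Fin n → ℝ) (l : ℝ), (∀ i, 0 < w i) ∧ 0 < l ∧ T w = l • w := by
  have hune : (Finset.univ : Finset (Fin n)).Nonempty := Finset.univ_nonempty
  set K : Set (Fin n → ℝ) := {v | (∀ i, 0 ≤ v i) ∧ ∑ i, v i = 1} with hK
  have hKsub : K ⊆ Set.pi Set.univ (fun _ : Fin n => Set.Icc (0:ℝ) 1) := by
    rintro v ⟨hv0, hv1⟩ i _
    exact ⟨hv0 i, by
      rw [← hv1]
      exact Finset.single_le_sum (fun j _ => hv0 j) (Finset.mem_univ i)⟩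
  have hKclosed : IsClosed K := by
    have h1 : IsClosed {v : Fin n → ℝ | ∀ i, 0 ≤ v i} := by
      have : {v : Fin n → ℝ | ∀ i, 0 ≤ v i} = ⋂ i, {v | 0 ≤ v i} := by
        ext v; simp [Set.mem_iInter]
      rw [this]
      exact isClosed_iInter fun i => isClosed_le continuous_const (continuous_apply i)
    have h2 : IsClosed {v : Fin n → ℝ | ∑ i, v i = 1} :=
      isClosed_eq (continuous_finset_sum _ fun i _ => continuous_apply i) continuous_const
    exact h1.inter h2
  have hKcomp : IsCompact K :=
    (isCompact_univ_pi fun _ => isCompact_Icc).of_isClosed_subset hKclosed hKsub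
  have hn0 : (n:ℝ) ≠ 0 := by
    have : 0 < n := Fin.pos_iff_nonempty.mpr hn
    exact_mod_cast this.ne'
  set v₀ : Fin n → ℝ := fun _ => (n : ℝ)⁻¹ with hv₀
  have hv₀K : v₀ ∈ K := by
    constructor
    · intro i
      have : 0 < (n:ℝ) := lt_of_le_of_ne (Nat.cast_nonneg n) (Ne.symm hn0)
      positivity
    · simp [hv₀, Finset.sum_const, Finset.card_univ]
      field_simp
  have hKposc : ∀ v ∈ K, ∃ i, 0 < v i := by
    rintro v ⟨hv0, hv1⟩
    by_contra h
    push_neg at h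
    have : ∀ i, v i = 0 := fun i => le_antisymm (h i) (hv0 i)
    simp [this] at hv1
  have hTconti : ∀ i, Continuous (fun v => T v i) :=
    fun i => (continuous_apply i).comp hTcont
  have ha : ∀ i, ∃ c > 0, ∀ v ∈ K, c ≤ T v i := by
    intro i
    obtain ⟨vm, hvm, hmin⟩ := hKcomp.exists_isMinOn ⟨v₀, hv₀K⟩ (hTconti i).continuousOn
    refine ⟨T vm i, hTpos vm hvm.1 (hKposc vm hvm) i, fun v hv => hmin hv⟩
  choose af hafpos haf using ha
  set a : ℝ := Finset.univ.inf' hune af with hadef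
  have hapos : 0 < a := by
    rw [hadef, Finset.lt_inf'_iff]
    exact fun i _ => hafpos i
  have haK : ∀ v ∈ K, ∀ i, a ≤ T v i := fun v hv i =>
    le_trans (Finset.inf'_le af (Finset.mem_univ i)) (haf i v hv)
  set s : (Fin n → ℝ) → ℝ := fun v => ∑ i, T v i with hs
  have hscont : Continuous s := continuous_finset_sum _ fun i _ => hTconti i
  obtain ⟨vM, hvM, hmax⟩ := hKcomp.exists_isMaxOn ⟨v₀, hv₀K⟩ hscont.continuousOn
  set b : ℝ := s vM with hb
  have hbK : ∀ v ∈ K, s v ≤ b := fun v hv => hmax hv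
  have hsposK : ∀ v ∈ K, 0 < s v := by
    intro v hv
    exact Finset.sum_pos (fun i _ => hTpos v hv.1 (hKposc v hv) i) hune
  have hbpos : 0 < b := hsposK vM hvM
  set δ : ℝ := a / b with hδ
  have hδpos : 0 < δ := div_pos hapos hbpos
  set K' : Set (Fin n → ℝ) := {v | (∀ i, δ ≤ v i) ∧ ∑ i, v i = 1} with hK'
  have hK'K : K' ⊆ K := fun v hv => ⟨fun i => le_trans hδpos.le (hv.1 i), hv.2⟩
  have hK'closed : IsClosed K' := by
    have h1 : IsClosed {v : Fin n → ℝ | ∀ i, δ ≤ v i} := by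
      have : {v : Fin n → ℝ | ∀ i, δ ≤ v i} = ⋂ i, {v | δ ≤ v i} := by
        ext v; simp [Set.mem_iInter]
      rw [this]
      exact isClosed_iInter fun i => isClosed_le continuous_const (continuous_apply i)
    have h2 : IsClosed {v : Fin n → ℝ | ∑ i, v i = 1} :=
      isClosed_eq (continuous_finset_sum _ fun i _ => continuous_apply i) continuous_const
    exact h1.inter h2
  have hK'comp : IsCompact K' := hKcomp.of_isClosed_subset hK'closed hK'K
  have hNmem : ∀ v ∈ K, (s v)⁻¹ • T v ∈ K' := by
    intro v hv
    have hsv := hsposK v hv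
    constructor
    · intro i
      have h1 : a ≤ T v i := haK v hv i
      have h2 : s v ≤ b := hbK v hv
      have : a / b ≤ T v i / s v := by
        rw [div_le_div_iff₀ hbpos hsv]
        exact mul_le_mul h1 h2 hsv.le (le_trans hapos.le h1)
      simpa [Pi.smul_apply, smul_eq_mul, inv_mul_eq_div] using this
    · simp only [Pi.smul_apply, smul_eq_mul, ← Finset.mul_sum]
      exact inv_mul_cancel₀ hsv.ne'
  have hK'ne : K'.Nonempty := ⟨_, hNmem v₀ hv₀K⟩
  set g : (Fin n → ℝ) → ℝ := fun v => Finset.univ.inf' hune (fun i => T v i / v i) with hg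
  have hgcont : ContinuousOn g K' := by
    apply ContinuousOn.finset_inf'_apply hune
    intro i _
    apply ContinuousOn.div (hTconti i).continuousOn (continuous_apply i).continuousOn
    intro v hv
    exact (lt_of_lt_of_le hδpos (hv.1 i)).ne'
  obtain ⟨w, hwK', hwmax⟩ := hK'comp.exists_isMaxOn hK'ne hgcont
  have hwK : w ∈ K := hK'K hwK'
  have hwpos : ∀ i, 0 < w i := fun i => lt_of_lt_of_le hδpos (hwK'.1 i)
  set l : ℝ := g w with hl
  have hlpos : 0 < l := by
    rw [hl, hg, Finset.lt_inf'_iff]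
    exact fun i _ => div_pos (hTpos w hwK.1 (hKposc w hwK) i) (hwpos i)
  have hlw : ∀ i, l * w i ≤ T w i := by
    intro i
    have : l ≤ T w i / w i := Finset.inf'_le _ (Finset.mem_univ i)
    rw [le_div_iff₀ (hwpos i)] at this
    linarith [this]
  refine ⟨w, l, hwpos, hlpos, ?_⟩
  by_contra hne
  have hstrict : ∃ i, l * w i < T w i := by
    by_contra h
    push_neg at h
    exact hne (funext fun i => by
      have := le_antisymm (h i) (hlw i)
      simp [Pi.smul_apply, smul_eq_mul, this])
  have hkey : ∀ i, l * T w i < T (T w) i := by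
    intro i
    have := hTmono (l • w) (T w)
      (fun j => by rw [Pi.smul_apply, smul_eq_mul]; exact mul_nonneg hlpos.le (hwpos j).le)
      (fun j => by simpa [Pi.smul_apply, smul_eq_mul] using hlw j)
      (by obtain ⟨j, hj⟩ := hstrict; exact ⟨j, by simpa [Pi.smul_apply, smul_eq_mul] using hj⟩)
      i
    rwa [hThom l hlpos w hwK.1, Pi.smul_apply, smul_eq_mul] at this
  set w' : Fin n → ℝ := (s w)⁻¹ • T w with hw'
  have hw'K' : w' ∈ K' := hNmem w hwK
  have hsw := hsposK w hwK
  have hgw' : l < g w' := by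
    rw [hg, Finset.lt_inf'_iff]
    intro i _
    have hTwi : 0 < T w i := hTpos w hwK.1 (hKposc w hwK) i
    have hw'i : w' i = (s w)⁻¹ * T w i := rfl
    have hTw' : T w' = (s w)⁻¹ • T (T w) := by
      rw [hw']
      exact hThom (s w)⁻¹ (inv_pos.mpr hsw) (T w) (fun j => (hTpos w hwK.1 (hKposc w hwK) j).le)
    rw [hTw', Pi.smul_apply, smul_eq_mul, hw'i, lt_div_iff₀ (by positivity)]
    have := hkey i
    calc l * ((s w)⁻¹ * T w i) = (s w)⁻¹ * (l * T w i) := by ring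
      _ < (s w)⁻¹ * T (T w) i := mul_lt_mul_of_pos_left this (inv_pos.mpr hsw)
  exact absurd (hwmax hw'K') (not_le.mpr hgw')

/-! ### H-set attainment and entry bounds -/

lemma cont_mulVec_entry {N M : ℕ} (u : Fin M → ℝ) (i : Fin N) :
    Continuous (fun A : Matrix (Fin N) (Fin M) ℝ => A.mulVec u i) := by
  simp only [Matrix.mulVec, dotProduct]
  exact continuous_finset_sum _ fun j _ =>
    (continuous_id.matrix_elem i j).mul continuous_const

lemma exists_min_mat {N M : ℕ} (S : Set (Matrix (Fin N) (Fin M) ℝ))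
    (hS : IsHSet S) (hc : IsCompact S) (hne : S.Nonempty)
    (u : Fin M → ℝ) (hu : ∀ j, 0 < u j) :
    ∃ A₀ ∈ S, ∀ A ∈ S, ∀ i, A₀.mulVec u i ≤ A.mulVec u i := by
  obtain ⟨A₀, hA₀, hmin⟩ := hc.exists_isMinOn hne
    (continuous_finset_sum Finset.univ
      (fun i _ => cont_mulVec_entry u i)).continuousOn
  refine ⟨A₀, hA₀, ?_⟩
  rcases (hS.2 A₀ hA₀ u hu).1 with h | ⟨A', hA', hle, hneq⟩
  · exact fun A hA i => h A hA i
  · exfalso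
    have hlt : ∑ i, A'.mulVec u i < ∑ i, A₀.mulVec u i := by
      apply Finset.sum_lt_sum (fun i _ => hle i)
      rcases Function.ne_iff.mp hneq with ⟨i, hi⟩
      exact ⟨i, Finset.mem_univ i, lt_of_le_of_ne (hle i) hi⟩
    exact absurd (hmin hA') (not_le.mpr hlt)

lemma exists_max_mat {N M : ℕ} (S : Set (Matrix (Fin N) (Fin M) ℝ))
    (hS : IsHSet S) (hc : IsCompact S) (hne : S.Nonempty)
    (u : Fin M → ℝ) (hu : ∀ j, 0 < u j) :
    ∃ B₀ ∈ S, ∀ B ∈ S, ∀ i, B.mulVec u i ≤ B₀.mulVec u i := by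
  obtain ⟨B₀, hB₀, hmax⟩ := hc.exists_isMaxOn hne
    (continuous_finset_sum Finset.univ
      (fun i _ => cont_mulVec_entry u i)).continuousOn
  refine ⟨B₀, hB₀, ?_⟩
  rcases (hS.2 B₀ hB₀ u hu).2 with h | ⟨B', hB', hle, hneq⟩
  · exact fun B hB i => h B hB i
  · exfalso
    have hlt : ∑ i, B₀.mulVec u i < ∑ i, B'.mulVec u i := by
      apply Finset.sum_lt_sum (fun i _ => hle i)
      rcases Function.ne_iff.mp hneq with ⟨i, hi⟩
      exact ⟨i, Finset.mem_univ i, lt_of_le_of_ne (hle i) (Ne.symm hi)⟩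
    exact absurd (hmax hB') (not_le.mpr hlt)

lemma exists_entry_lb {N M : ℕ} (S : Set (Matrix (Fin N) (Fin M) ℝ))
    (hc : IsCompact S) (hne : S.Nonempty) (hpos : ∀ A ∈ S, ∀ i j, 0 < A i j)
    (hN : Nonempty (Fin N)) (hM : Nonempty (Fin M)) :
    ∃ ε > 0, ∀ A ∈ S, ∀ i j, ε ≤ A i j := by
  have h : ∀ p : Fin N × Fin M, ∃ c > 0, ∀ A ∈ S, c ≤ A p.1 p.2 := by
    intro p
    obtain ⟨A₀, hA₀, hmin⟩ := hc.exists_isMinOn hne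
      (((continuous_apply p.2).comp (continuous_apply p.1)).continuousOn)
    exact ⟨A₀ p.1 p.2, hpos A₀ hA₀ p.1 p.2, fun A hA => hmin hA⟩
  choose εf hεpos hεle using h
  have hne' : (Finset.univ : Finset (Fin N × Fin M)).Nonempty := Finset.univ_nonempty
  refine ⟨Finset.univ.inf' hne' εf, ?_, ?_⟩
  · rw [gt_iff_lt, Finset.lt_inf'_iff]; exact fun p _ => hεpos p
  · intro A hA i j
    exact le_trans (Finset.inf'_le εf (Finset.mem_univ (i, j))) (hεle (i, j) A hA)

lemma exists_entry_ub {N M : ℕ} (S : Set (Matrix (Fin N) (Fin M) ℝ))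
    (hc : IsCompact S) (hne : S.Nonempty) :
    ∃ L : ℝ, 0 ≤ L ∧ ∀ A ∈ S, ∀ i j, |A i j| ≤ L := by
  have h : ∀ p : Fin N × Fin M, ∃ c, 0 ≤ c ∧ ∀ A ∈ S, |A p.1 p.2| ≤ c := by
    intro p
    obtain ⟨A₀, hA₀, hmax⟩ := hc.exists_isMaxOn hne
      ((((continuous_apply p.2).comp (continuous_apply p.1)).abs).continuousOn)
    exact ⟨|A₀ p.1 p.2|, abs_nonneg _, fun A hA => hmax hA⟩
  choose Lf hL0 hLle using h
  rcases isEmpty_or_nonempty (Fin N × Fin M) with hE | hNE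
  · exact ⟨0, le_refl 0, fun A hA i j => absurd trivial (by simpa using (hE.false (i, j)))⟩
  · have hne' : (Finset.univ : Finset (Fin N × Fin M)).Nonempty := Finset.univ_nonempty
    refine ⟨Finset.univ.sup' hne' Lf,
      le_trans (hL0 hNE.some) (Finset.le_sup' Lf (Finset.mem_univ _)), ?_⟩
    intro A hA i j
    exact le_trans (hLle (i, j) A hA) (Finset.le_sup' Lf (Finset.mem_univ (i, j)))

/-! ### sup/inf envelope vectors -/

noncomputable def supVec {M N : ℕ} (S : Set (Matrix (Fin M) (Fin N) ℝ)) (v : Fin N → ℝ) :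
    Fin M → ℝ := fun j => sSup ((fun B => B.mulVec v j) '' S)

noncomputable def infVec {N M : ℕ} (S : Set (Matrix (Fin N) (Fin M) ℝ)) (u : Fin M → ℝ) :
    Fin N → ℝ := fun i => sInf ((fun A => A.mulVec u i) '' S)

section envelopes
variable {M N : ℕ}

lemma bddAbove_img (S : Set (Matrix (Fin M) (Fin N) ℝ)) (hc : IsCompact S)
    (v : Fin N → ℝ) (j : Fin M) : BddAbove ((fun B => B.mulVec v j) '' S) :=
  (hc.image (cont_mulVec_entry v j)).bddAbove

lemma bddBelow_img (S : Set (Matrix (Fin M) (Fin N) ℝ)) (hc : IsCompact S)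
    (v : Fin N → ℝ) (j : Fin M) : BddBelow ((fun B => B.mulVec v j) '' S) :=
  (hc.image (cont_mulVec_entry v j)).bddBelow

lemma le_supVec (S : Set (Matrix (Fin M) (Fin N) ℝ)) (hc : IsCompact S)
    {B : Matrix (Fin M) (Fin N) ℝ} (hB : B ∈ S) (v : Fin N → ℝ) (j : Fin M) :
    B.mulVec v j ≤ supVec S v j :=
  le_csSup (bddAbove_img S hc v j) ⟨B, hB, rfl⟩

lemma supVec_le (S : Set (Matrix (Fin M) (Fin N) ℝ)) (hne : S.Nonempty)
    (v : Fin N → ℝ) (j : Fin M) {c : ℝ} (h : ∀ B ∈ S, B.mulVec v j ≤ c) :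
    supVec S v j ≤ c :=
  csSup_le (hne.image _) (by rintro z ⟨B, hB, rfl⟩; exact h B hB)

lemma infVec_le (S : Set (Matrix (Fin N) (Fin M) ℝ)) (hc : IsCompact S)
    {A : Matrix (Fin N) (Fin M) ℝ} (hA : A ∈ S) (u : Fin M → ℝ) (i : Fin N) :
    infVec S u i ≤ A.mulVec u i :=
  csInf_le (bddBelow_img S hc u i) ⟨A, hA, rfl⟩

lemma le_infVec (S : Set (Matrix (Fin N) (Fin M) ℝ)) (hne : S.Nonempty)
    (u : Fin M → ℝ) (i : Fin N) {c : ℝ} (h : ∀ A ∈ S, c ≤ A.mulVec u i) :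
    c ≤ infVec S u i :=
  le_csInf (hne.image _) (by rintro z ⟨A, hA, rfl⟩; exact h A hA)

lemma supVec_eq (S : Set (Matrix (Fin M) (Fin N) ℝ)) (hc : IsCompact S) (hne : S.Nonempty)
    {B₀ : Matrix (Fin M) (Fin N) ℝ} (hB₀ : B₀ ∈ S) (v : Fin N → ℝ)
    (hmax : ∀ B ∈ S, ∀ j, B.mulVec v j ≤ B₀.mulVec v j) (j : Fin M) :
    supVec S v j = B₀.mulVec v j :=
  le_antisymm (supVec_le S hne v j (fun B hB => hmax B hB j)) (le_supVec S hc hB₀ v j)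

lemma infVec_eq (S : Set (Matrix (Fin N) (Fin M) ℝ)) (hc : IsCompact S) (hne : S.Nonempty)
    {A₀ : Matrix (Fin N) (Fin M) ℝ} (hA₀ : A₀ ∈ S) (u : Fin M → ℝ)
    (hmin : ∀ A ∈ S, ∀ i, A₀.mulVec u i ≤ A.mulVec u i) (i : Fin N) :
    infVec S u i = A₀.mulVec u i :=
  le_antisymm (infVec_le S hc hA₀ u i) (le_infVec S hne u i (fun A hA => hmin A hA i))

lemma supVec_smul (S : Set (Matrix (Fin M) (Fin N) ℝ)) (hc : IsCompact S) (hne : S.Nonempty)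
    (c : ℝ) (hcpos : 0 < c) (v : Fin N → ℝ) (j : Fin M) :
    supVec S (c • v) j = c * supVec S v j := by
  apply le_antisymm
  · apply supVec_le S hne _ _
    intro B hB
    rw [Matrix.mulVec_smul]
    exact mul_le_mul_of_nonneg_left (le_supVec S hc hB v j) hcpos.le
  · rw [← le_div_iff₀' hcpos]
    apply supVec_le S hne _ _
    intro B hB
    rw [le_div_iff₀' hcpos]
    calc c * B.mulVec v j = B.mulVec (c • v) j := by rw [Matrix.mulVec_smul]; rfl
      _ ≤ supVec S (c • v) j := le_supVec S hc hB _ j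

lemma infVec_smul (S : Set (Matrix (Fin N) (Fin M) ℝ)) (hc : IsCompact S) (hne : S.Nonempty)
    (c : ℝ) (hcpos : 0 < c) (u : Fin M → ℝ) (i : Fin N) :
    infVec S (c • u) i = c * infVec S u i := by
  apply le_antisymm
  · rw [← div_le_iff₀' hcpos]
    apply le_infVec S hne _ _
    intro A hA
    rw [div_le_iff₀' hcpos]
    calc infVec S (c • u) i ≤ A.mulVec (c • u) i := infVec_le S hc hA _ i
      _ = c * A.mulVec u i := by rw [Matrix.mulVec_smul]; rfl
  · apply le_infVec S hne _ _
    intro A hA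
    rw [Matrix.mulVec_smul]
    exact mul_le_mul_of_nonneg_left (infVec_le S hc hA u i) hcpos.le

lemma mulVec_entry_sub_le (B : Matrix (Fin M) (Fin N) ℝ) (L : ℝ)
    (hL : ∀ i j, |B i j| ≤ L) (x y : Fin N → ℝ) (j : Fin M) :
    B.mulVec x j - B.mulVec y j ≤ (N * L) * dist x y := by
  rw [Matrix.mulVec, Matrix.mulVec, dotProduct, dotProduct,
    ← Finset.sum_sub_distrib]
  calc ∑ i, (B j i * x i - B j i * y i) = ∑ i, B j i * (x i - y i) := by
        congr 1; funext i; ring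
    _ ≤ ∑ i : Fin N, L * dist x y := by
        apply Finset.sum_le_sum
        intro i _
        calc B j i * (x i - y i) ≤ |B j i * (x i - y i)| := le_abs_self _
          _ = |B j i| * |x i - y i| := abs_mul _ _
          _ ≤ L * dist x y := by
              apply mul_le_mul (hL j i) ?_ (abs_nonneg _) (le_trans (abs_nonneg _) (hL j i))
              rw [← Real.dist_eq]
              exact dist_le_pi_dist x y i
    _ = (N * L) * dist x y := by
        rw [Finset.sum_const, Finset.card_univ, Fintype.card_fin, nsmul_eq_mul]
        ring

lemma supVec_continuous (S : Set (Matrix (Fin M) (Fin N) ℝ)) (hc : IsCompact S)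
    (hne : S.Nonempty) (L : ℝ) (hL0 : 0 ≤ L) (hL : ∀ B ∈ S, ∀ i j, |B i j| ≤ L) :
    Continuous (fun v : Fin N → ℝ => supVec S v) := by
  apply continuous_pi
  intro j
  have key : ∀ x y : Fin N → ℝ, supVec S x j ≤ supVec S y j + (N * L) * dist x y := by
    intro x y
    apply supVec_le S hne
    intro B hB
    have := mulVec_entry_sub_le B L (hL B hB) x y j
    have h2 := le_supVec S hc hB y j
    linarith
  have hlip : LipschitzWith (Real.toNNReal (N * L)) (fun v : Fin N → ℝ => supVec S v j) := by
    apply LipschitzWith.of_dist_le_mul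
    intro x y
    rw [Real.dist_eq, Real.coe_toNNReal _ (by positivity), abs_sub_le_iff]
    constructor
    · have := key x y; linarith
    · have := key y x; rw [dist_comm] at this; linarith
  exact hlip.continuous

lemma infVec_continuous (S : Set (Matrix (Fin N) (Fin M) ℝ)) (hc : IsCompact S)
    (hne : S.Nonempty) (L : ℝ) (hL0 : 0 ≤ L) (hL : ∀ A ∈ S, ∀ i j, |A i j| ≤ L) :
    Continuous (fun u : Fin M → ℝ => infVec S u) := by
  apply continuous_pi
  intro i
  have key : ∀ x y : Fin M → ℝ, infVec S x i ≤ infVec S y i + (M * L) * dist x y := by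
    intro x y
    have : ∀ A ∈ S, infVec S x i - (M * L) * dist x y ≤ A.mulVec y i := by
      intro A hA
      have h1 := mulVec_entry_sub_le A L (hL A hA) x y i
      have h2 := infVec_le S hc hA x i
      linarith
    have := le_infVec S hne y i (c := infVec S x i - (M * L) * dist x y) this
    linarith
  have hlip : LipschitzWith (Real.toNNReal (M * L)) (fun u : Fin M → ℝ => infVec S u i) := by
    apply LipschitzWith.of_dist_le_mul
    intro x y
    rw [Real.dist_eq, Real.coe_toNNReal _ (by positivity), abs_sub_le_iff]
    constructor
    · have := key x y; linarith
    · have := key y x; rw [dist_comm] at this; linarith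
  exact hlip.continuous

end envelopes

/-- lower Collatz–Wielandt bound via a left Perron eigenvector -/
lemma le_specRad_of_subeigen {n : ℕ} (hn : Nonempty (Fin n)) (C : Matrix (Fin n) (Fin n) ℝ)
    (hCpos : ∀ i j, 0 < C i j) (w : Fin n → ℝ) (hw : ∀ i, 0 < w i) (l : ℝ)
    (hl : 0 ≤ l) (hCw : ∀ i, l * w i ≤ C.mulVec w i) : l ≤ specRad C := by
  -- left Perron eigenvector: eigenvector of Cᵀ
  obtain ⟨y, l', hy, hl', heig⟩ := exists_eigen hn (fun v => Cᵀ.mulVec v)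
    (continuous_pi fun i => by
      simp only [Matrix.mulVec, dotProduct]
      exact continuous_finset_sum _ fun j _ => (continuous_const.mul (continuous_apply j)))
    (by
      intro v hv0 ⟨j0, hj0⟩ i
      simp only [Matrix.mulVec, dotProduct, Matrix.transpose_apply]
      apply Finset.sum_pos'
      · exact fun j _ => mul_nonneg (hCpos j i).le (hv0 j)
      · exact ⟨j0, Finset.mem_univ j0, mul_pos (hCpos j0 i) hj0⟩)
    (fun c hc v _ => Matrix.mulVec_smul _ _ _)
    (by
      intro x y hx hxy ⟨j0, hj0⟩ i
      simp only [Matrix.mulVec, dotProduct, Matrix.transpose_apply]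
      apply Finset.sum_lt_sum
      · exact fun j _ => mul_le_mul_of_nonneg_left (hxy j) (hCpos j i).le
      · exact ⟨j0, Finset.mem_univ j0, mul_lt_mul_of_pos_left hj0 (hCpos j0 i)⟩)
  -- l ≤ l'
  have hS0 : 0 < ∑ i, y i * w i :=
    Finset.sum_pos (fun i _ => mul_pos (hy i) (hw i)) Finset.univ_nonempty
  have hswap : ∑ i, y i * C.mulVec w i = ∑ j, (Cᵀ.mulVec y j) * w j := by
    simp only [Matrix.mulVec, dotProduct, Matrix.transpose_apply,
      Finset.mul_sum, Finset.sum_mul]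
    rw [Finset.sum_comm]
    apply Finset.sum_congr rfl
    intro j _
    apply Finset.sum_congr rfl
    intro i _
    ring
  have hll' : l * (∑ i, y i * w i) ≤ l' * (∑ i, y i * w i) := by
    calc l * (∑ i, y i * w i) = ∑ i, y i * (l * w i) := by
          rw [Finset.mul_sum]; apply Finset.sum_congr rfl; intros; ring
      _ ≤ ∑ i, y i * C.mulVec w i :=
          Finset.sum_le_sum fun i _ => mul_le_mul_of_nonneg_left (hCw i) (hy i).le
      _ = ∑ j, (Cᵀ.mulVec y j) * w j := hswap
      _ = l' * (∑ i, y i * w i) := by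
          rw [heig, Finset.mul_sum]
          apply Finset.sum_congr rfl
          intro j _
          rw [Pi.smul_apply, smul_eq_mul]
          ring
  have hle : l ≤ l' := le_of_mul_le_mul_right hll' hS0
  -- l' ∈ spectrum of C
  have hmem : (l' : ℂ) ∈ spectrum ℂ (C.map Complex.ofReal) := by
    rw [← spectrum_transpose, ← Matrix.transpose_map]
    apply mem_spectrum_of_eigen _ _ (fun j => (y j : ℂ))
    · intro h
      have := congrFun h hn.some
      simp only [Pi.zero_apply, Complex.ofReal_eq_zero] at this
      exact (hy hn.some).ne' this
    · rw [map_mulVec_ofReal]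
      funext i
      rw [heig]
      simp
  -- bddAbove
  have hune : (Finset.univ : Finset (Fin n)).Nonempty := Finset.univ_nonempty
  set l0 : ℝ := Finset.univ.sup' hune (fun i => C.mulVec w i / w i) with hl0
  have hCw0 : ∀ i, C.mulVec w i ≤ l0 * w i := by
    intro i
    have : C.mulVec w i / w i ≤ l0 := by
      rw [hl0]; exact Finset.le_sup' (fun k => C.mulVec w k / w k) (Finset.mem_univ i)
    rw [div_le_iff₀ (hw i)] at this
    linarith
  have hbdd := bddAbove_absSpec C (fun i j => (hCpos i j).le) w hw l0 hCw0
  have := le_csSup hbdd (⟨_, hmem, rfl⟩ :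
    ‖(l' : ℂ)‖ ∈ (fun z : ℂ => ‖z‖) '' spectrum ℂ (C.map Complex.ofReal))
  rw [Complex.norm_real, Real.norm_of_nonneg hl'.le] at this
  exact le_trans hle this

/-- entrywise positivity passes to the convex hull -/
lemma convexHull_pos {N M : ℕ} (S : Set (Matrix (Fin N) (Fin M) ℝ))
    (hpos : ∀ A ∈ S, ∀ i j, 0 < A i j) :
    ∀ A ∈ convexHull ℝ S, ∀ i j, 0 < A i j := by
  intro A hA
  have hsub : S ⊆ {X : Matrix (Fin N) (Fin M) ℝ | ∀ i j, 0 < X i j} := fun X hX => hpos X hX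
  have hconv : Convex ℝ {X : Matrix (Fin N) (Fin M) ℝ | ∀ i j, 0 < X i j} := by
    intro X hX Y hY p q hp hq hpq
    intro i j
    have : (p • X + q • Y) i j = p * X i j + q * Y i j := by
      simp [Matrix.add_apply, Matrix.smul_apply, smul_eq_mul]
    rw [this]
    rcases eq_or_lt_of_le hp with hp0 | hp0
    · have hq1 : q = 1 := by linarith
      rw [← hp0, hq1]; simpa using hY i j
    · exact add_pos_of_pos_of_nonneg (mul_pos hp0 (hX i j))
        (mul_nonneg hq (hY i j).le)
  exact convexHull_min hsub hconv hA

/-- lower halfspaces are convex -/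
lemma convexHull_mulVec_ge {N M : ℕ} (S : Set (Matrix (Fin N) (Fin M) ℝ))
    (u : Fin M → ℝ) (c : Fin N → ℝ) (h : ∀ A ∈ S, ∀ i, c i ≤ A.mulVec u i) :
    ∀ A ∈ convexHull ℝ S, ∀ i, c i ≤ A.mulVec u i := by
  intro A hA
  have hconv : Convex ℝ {X : Matrix (Fin N) (Fin M) ℝ | ∀ i, c i ≤ X.mulVec u i} := by
    intro X hX Y hY p q hp hq hpq i
    have : (p • X + q • Y).mulVec u i = p * X.mulVec u i + q * Y.mulVec u i := by
      rw [Matrix.add_mulVec]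
      simp [Matrix.smul_mulVec, Pi.smul_apply, smul_eq_mul]
    rw [this]
    calc c i = p * c i + q * c i := by rw [← add_mul, hpq, one_mul]
      _ ≤ p * X.mulVec u i + q * Y.mulVec u i :=
          add_le_add (mul_le_mul_of_nonneg_left (hX i) hp)
            (mul_le_mul_of_nonneg_left (hY i) hq)
  exact convexHull_min (fun X hX => h X hX) hconv hA

lemma convexHull_mulVec_le {N M : ℕ} (S : Set (Matrix (Fin N) (Fin M) ℝ))
    (u : Fin M → ℝ) (c : Fin N → ℝ) (h : ∀ A ∈ S, ∀ i, A.mulVec u i ≤ c i) :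
    ∀ A ∈ convexHull ℝ S, ∀ i, A.mulVec u i ≤ c i := by
  intro A hA
  have hconv : Convex ℝ {X : Matrix (Fin N) (Fin M) ℝ | ∀ i, X.mulVec u i ≤ c i} := by
    intro X hX Y hY p q hp hq hpq i
    have : (p • X + q • Y).mulVec u i = p * X.mulVec u i + q * Y.mulVec u i := by
      rw [Matrix.add_mulVec]
      simp [Matrix.smul_mulVec, Pi.smul_apply, smul_eq_mul]
    rw [this]
    calc p * X.mulVec u i + q * Y.mulVec u i ≤ p * c i + q * c i :=
          add_le_add (mul_le_mul_of_nonneg_left (hX i) hp)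
            (mul_le_mul_of_nonneg_left (hY i) hq)
      _ = c i := by rw [← add_mul, hpq, one_mul]
  exact convexHull_min (fun X hX => h X hX) hconv hA


end Stmt16Aux


open Stmt16Aux

theorem stmt16 {N M : ℕ} (𝒜 : Set (Matrix (Fin N) (Fin M) ℝ))
    (ℬ : Set (Matrix (Fin M) (Fin N) ℝ))
    (h𝒜 : IsHSet 𝒜) (hℬ : IsHSet ℬ)
    (h𝒜c : IsCompact 𝒜) (hℬc : IsCompact ℬ)
    (h𝒜ne : 𝒜.Nonempty) (hℬne : ℬ.Nonempty) :
    ∃ A₀ ∈ 𝒜, ∃ B₀ ∈ ℬ, ∀ A ∈ convexHull ℝ 𝒜, ∀ B ∈ convexHull ℝ ℬ,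
      specRad (A₀ * B) ≤ specRad (A₀ * B₀) ∧ specRad (A₀ * B₀) ≤ specRad (A * B₀) := by
  classical
  rcases Nat.eq_zero_or_pos N with hN0 | hNpos
  · -- degenerate case N = 0 : all spectra are empty
    subst hN0
    obtain ⟨A₀, hA₀⟩ := h𝒜ne
    obtain ⟨B₀, hB₀⟩ := hℬne
    have hsr : ∀ C : Matrix (Fin 0) (Fin 0) ℝ, specRad C = 0 := by
      intro C
      haveI hsub : Subsingleton (Matrix (Fin 0) (Fin 0) ℂ) :=
        ⟨fun X Y => by ext i; exact i.elim0⟩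
      have hspec : spectrum ℂ (C.map Complex.ofReal) = ∅ := by
        ext μ
        simp [spectrum.mem_iff, isUnit_of_subsingleton]
      unfold specRad
      rw [hspec, Set.image_empty, Real.sSup_empty]
    exact ⟨A₀, hA₀, B₀, hB₀, fun A _ B _ => by
      rw [hsr, hsr, hsr]
      exact ⟨le_refl _, le_refl _⟩⟩
  rcases Nat.eq_zero_or_pos M with hM0 | hMpos
  · -- degenerate case M = 0 : all products are zero
    subst hM0
    obtain ⟨A₀, hA₀⟩ := h𝒜ne
    obtain ⟨B₀, hB₀⟩ := hℬne
    have hzero : ∀ (X : Matrix (Fin N) (Fin 0) ℝ) (Y : Matrix (Fin 0) (Fin N) ℝ),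
        X * Y = A₀ * B₀ := by
      intro X Y
      ext i k
      rw [Matrix.mul_apply, Matrix.mul_apply]
      exact Finset.sum_congr (by simp) (fun j _ => j.elim0)
    exact ⟨A₀, hA₀, B₀, hB₀, fun A _ B _ => by
      rw [hzero A₀ B, hzero A B₀]
      exact ⟨le_refl _, le_refl _⟩⟩
  -- main case
  haveI hNne : Nonempty (Fin N) := ⟨⟨0, hNpos⟩⟩
  haveI hMne : Nonempty (Fin M) := ⟨⟨0, hMpos⟩⟩
  obtain ⟨εA, hεApos, hεA⟩ := exists_entry_lb 𝒜 h𝒜c h𝒜ne h𝒜.1 hNne hMne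
  obtain ⟨εB, hεBpos, hεB⟩ := exists_entry_lb ℬ hℬc hℬne hℬ.1 hMne hNne
  obtain ⟨LA, hLA0, hLA⟩ := exists_entry_ub 𝒜 h𝒜c h𝒜ne
  obtain ⟨LB, hLB0, hLB⟩ := exists_entry_ub ℬ hℬc hℬne
  -- positivity of sup envelope
  have hsupB_pos : ∀ v : Fin N → ℝ, (∀ i, 0 ≤ v i) → (∃ i, 0 < v i) →
      ∀ j, 0 < supVec ℬ v j := by
    intro v hv0 ⟨i0, hi0⟩ j
    obtain ⟨B₀, hB₀⟩ := hℬne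
    have : 0 < B₀.mulVec v j := by
      rw [Matrix.mulVec, dotProduct]
      apply Finset.sum_pos'
      · exact fun i _ => mul_nonneg (hℬ.1 B₀ hB₀ j i).le (hv0 i)
      · exact ⟨i0, Finset.mem_univ i0, mul_pos (hℬ.1 B₀ hB₀ j i0) hi0⟩
    exact lt_of_lt_of_le this (le_supVec ℬ hℬc hB₀ v j)
  have hsupB_nonneg : ∀ v : Fin N → ℝ, (∀ i, 0 ≤ v i) → ∀ j, 0 ≤ supVec ℬ v j := by
    intro v hv0 j
    obtain ⟨B₀, hB₀⟩ := hℬne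
    have : 0 ≤ B₀.mulVec v j := by
      rw [Matrix.mulVec, dotProduct]
      exact Finset.sum_nonneg fun i _ => mul_nonneg (hℬ.1 B₀ hB₀ j i).le (hv0 i)
    exact le_trans this (le_supVec ℬ hℬc hB₀ v j)
  -- the nonlinear operator
  set T : (Fin N → ℝ) → (Fin N → ℝ) := fun v => infVec 𝒜 (supVec ℬ v) with hT
  have hTcont : Continuous T :=
    (infVec_continuous 𝒜 h𝒜c h𝒜ne LA hLA0 hLA).comp
      (supVec_continuous ℬ hℬc hℬne LB hLB0 hLB)
  have hTpos : ∀ v : Fin N → ℝ, (∀ i, 0 ≤ v i) → (∃ i, 0 < v i) → ∀ i, 0 < T v i := by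
    intro v hv0 hvp i
    have hu := hsupB_pos v hv0 hvp
    apply lt_of_lt_of_le (mul_pos hεApos (hu hMne.some))
    apply le_infVec 𝒜 h𝒜ne
    intro A' hA'
    rw [Matrix.mulVec, dotProduct]
    calc εA * supVec ℬ v hMne.some ≤ A' i hMne.some * supVec ℬ v hMne.some :=
          mul_le_mul_of_nonneg_right (hεA A' hA' i hMne.some) (hu hMne.some).le
      _ ≤ ∑ j, A' i j * supVec ℬ v j :=
          Finset.single_le_sum (fun j _ => mul_nonneg (h𝒜.1 A' hA' i j).le (hu j).le)
            (Finset.mem_univ hMne.some)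
  have hThom : ∀ c : ℝ, 0 < c → ∀ v : Fin N → ℝ, (∀ i, 0 ≤ v i) →
      T (c • v) = c • T v := by
    intro c hc v hv0
    have h1 : supVec ℬ (c • v) = c • supVec ℬ v :=
      funext fun j => supVec_smul ℬ hℬc hℬne c hc v j
    funext i
    rw [hT]
    simp only
    rw [h1, infVec_smul 𝒜 h𝒜c h𝒜ne c hc (supVec ℬ v) i]
    rfl
  have hTmono : ∀ x y : Fin N → ℝ, (∀ i, 0 ≤ x i) → (∀ i, x i ≤ y i) →
      (∃ i, x i < y i) → ∀ i, T x i < T y i := by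
    intro x y hx0 hxy ⟨i0, hi0⟩ i
    set c0 : ℝ := εB * (y i0 - x i0) with hc0
    have hc0pos : 0 < c0 := mul_pos hεBpos (by linarith [hi0])
    -- supVec gap
    have hgap : ∀ j, supVec ℬ x j + c0 ≤ supVec ℬ y j := by
      intro j
      have h1 : ∀ B' ∈ ℬ, B'.mulVec x j + c0 ≤ B'.mulVec y j := by
        intro B' hB'
        have hd : B'.mulVec y j - B'.mulVec x j = ∑ i, B' j i * (y i - x i) := by
          rw [Matrix.mulVec, Matrix.mulVec, dotProduct, dotProduct,
            ← Finset.sum_sub_distrib]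
          apply Finset.sum_congr rfl
          intros; ring
        have h2 : c0 ≤ ∑ i, B' j i * (y i - x i) := by
          calc c0 = εB * (y i0 - x i0) := hc0
            _ ≤ B' j i0 * (y i0 - x i0) :=
                mul_le_mul_of_nonneg_right (hεB B' hB' j i0) (by linarith [hi0])
            _ ≤ ∑ i, B' j i * (y i - x i) :=
                Finset.single_le_sum (f := fun i => B' j i * (y i - x i))
                  (fun i _ => mul_nonneg (hℬ.1 B' hB' j i).le (by linarith [hxy i]))
                  (Finset.mem_univ i0)
        linarith [hd ▸ h2]
      have := supVec_le ℬ hℬne x j (c := supVec ℬ y j - c0) (fun B' hB' => by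
        have := h1 B' hB'
        have h3 := le_supVec ℬ hℬc hB' y j
        linarith)
      linarith
    -- infVec gap
    have hsx_nonneg : ∀ j, 0 ≤ supVec ℬ x j := hsupB_nonneg x hx0
    apply lt_of_lt_of_le (lt_add_of_pos_right (T x i) (mul_pos hεApos hc0pos))
    apply le_infVec 𝒜 h𝒜ne
    intro A' hA'
    have h4 : A'.mulVec (supVec ℬ x) i + εA * c0 ≤ A'.mulVec (supVec ℬ y) i := by
      have hd : A'.mulVec (supVec ℬ y) i - A'.mulVec (supVec ℬ x) i
          = ∑ j, A' i j * (supVec ℬ y j - supVec ℬ x j) := by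
        rw [Matrix.mulVec, Matrix.mulVec, dotProduct, dotProduct,
          ← Finset.sum_sub_distrib]
        apply Finset.sum_congr rfl
        intros; ring
      have h5 : εA * c0 ≤ ∑ j, A' i j * (supVec ℬ y j - supVec ℬ x j) := by
        calc εA * c0 ≤ A' i hMne.some * c0 :=
              mul_le_mul_of_nonneg_right (hεA A' hA' i hMne.some) hc0pos.le
          _ ≤ A' i hMne.some * (supVec ℬ y hMne.some - supVec ℬ x hMne.some) :=
              mul_le_mul_of_nonneg_left (by linarith [hgap hMne.some])
                (h𝒜.1 A' hA' i hMne.some).le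
          _ ≤ ∑ j, A' i j * (supVec ℬ y j - supVec ℬ x j) :=
              Finset.single_le_sum (f := fun j => A' i j * (supVec ℬ y j - supVec ℬ x j))
                (fun j _ => mul_nonneg (h𝒜.1 A' hA' i j).le (by linarith [hgap j]))
                (Finset.mem_univ hMne.some)
      linarith [hd ▸ h5]
    have h6 : T x i ≤ A'.mulVec (supVec ℬ x) i := infVec_le 𝒜 h𝒜c hA' _ i
    linarith
  -- the Perron eigenvector of T
  obtain ⟨w, l, hwpos, hlpos, heigT⟩ := exists_eigen hNne T hTcont hTpos hThom hTmono
  set u : Fin M → ℝ := supVec ℬ w with hu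
  have hupos : ∀ j, 0 < u j := hsupB_pos w (fun i => (hwpos i).le) ⟨hNne.some, hwpos _⟩
  obtain ⟨Bt, hBt, hBtmax⟩ := exists_max_mat ℬ hℬ hℬc hℬne w hwpos
  have hBtw : ∀ j, Bt.mulVec w j = u j :=
    fun j => (supVec_eq ℬ hℬc hℬne hBt w hBtmax j).symm
  obtain ⟨At, hAt, hAtmin⟩ := exists_min_mat 𝒜 h𝒜 h𝒜c h𝒜ne u hupos
  have hAtu : ∀ i, At.mulVec u i = l * w i := by
    intro i
    have h1 : infVec 𝒜 u i = At.mulVec u i := infVec_eq 𝒜 h𝒜c h𝒜ne hAt u hAtmin i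
    have h2 : T w i = l * w i := by rw [heigT]; rfl
    rw [← h1]
    exact h2
  refine ⟨At, hAt, Bt, hBt, ?_⟩
  intro A hA B hB
  -- facts about hull members
  have hApos : ∀ i j, 0 < A i j := convexHull_pos 𝒜 h𝒜.1 A hA
  have hBpos : ∀ j i, 0 < B j i := convexHull_pos ℬ hℬ.1 B hB
  have hAu : ∀ i, l * w i ≤ A.mulVec u i := by
    apply convexHull_mulVec_ge 𝒜 u (fun i => l * w i) ?_ A hA
    intro A' hA' i
    have h := hAtmin A' hA' i
    rw [hAtu i] at h
    exact h
  have hBw : ∀ j, B.mulVec w j ≤ u j := by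
    apply convexHull_mulVec_le ℬ w u ?_ B hB
    intro B' hB' j
    exact (hBtmax B' hB' j).trans_eq (hBtw j)
  -- positivity of products
  have hmulpos : ∀ (X : Matrix (Fin N) (Fin M) ℝ) (Y : Matrix (Fin M) (Fin N) ℝ),
      (∀ i j, 0 < X i j) → (∀ j i, 0 < Y j i) → ∀ i k, 0 < (X * Y) i k := by
    intro X Y hX hY i k
    rw [Matrix.mul_apply]
    exact Finset.sum_pos (fun j _ => mul_pos (hX i j) (hY j k)) Finset.univ_nonempty
  have hAtpos : ∀ i j, 0 < At i j := h𝒜.1 At hAt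
  have hBtpos : ∀ j i, 0 < Bt j i := hℬ.1 Bt hBt
  -- eigen-equation for At * Bt
  have heigAtBt : (At * Bt).mulVec w = l • w := by
    rw [← Matrix.mulVec_mulVec]
    have : Bt.mulVec w = u := funext hBtw
    rw [this]
    funext i
    rw [hAtu i]
    rfl
  have heigAtBt' : ∀ i, (At * Bt).mulVec w i ≤ l * w i := by
    intro i
    rw [heigAtBt]
    exact le_refl _
  constructor
  · -- specRad (At * B) ≤ specRad (At * Bt)
    have h1 : specRad (At * B) ≤ l := by
      apply specRad_le _ (fun i k => (hmulpos At B hAtpos hBpos i k).le) w hwpos l hlpos.le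
      intro i
      rw [← Matrix.mulVec_mulVec]
      calc At.mulVec (B.mulVec w) i ≤ At.mulVec u i := by
            rw [Matrix.mulVec, Matrix.mulVec, dotProduct, dotProduct]
            exact Finset.sum_le_sum fun j _ =>
              mul_le_mul_of_nonneg_left (hBw j) (hAtpos i j).le
        _ = l * w i := hAtu i
    have h2 : l ≤ specRad (At * Bt) := by
      apply le_specRad_of_eigen _ (fun i k => (hmulpos At Bt hAtpos hBtpos i k).le)
        w hwpos l l heigAtBt' w ?_ heigAtBt hlpos.le
      intro h
      exact (hwpos hNne.some).ne' (congrFun h hNne.some)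
    exact le_trans h1 h2
  · -- specRad (At * Bt) ≤ specRad (A * Bt)
    have h1 : specRad (At * Bt) ≤ l := by
      apply specRad_le _ (fun i k => (hmulpos At Bt hAtpos hBtpos i k).le)
        w hwpos l hlpos.le heigAtBt'
    have h2 : l ≤ specRad (A * Bt) := by
      apply le_specRad_of_subeigen hNne _ (hmulpos A Bt hApos hBtpos) w hwpos l hlpos.le
      intro i
      rw [← Matrix.mulVec_mulVec]
      have : Bt.mulVec w = u := funext hBtw
      rw [this]
      exact hAu i
    exact le_trans h1 h2
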